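/- Let u ∈ C¹ near r with u(r) = σ, u continuous, and suppose ∫_r^{r+δ} h(u(s))|u'(s)|² s^{N−1} ds < ∞ where h satisfies (σ−s)^γ h(s) → C > 0 as s → σ⁻ with γ ≥ 1 (so ∫^σ h = ∞). If u has a one-sided derivative u'(r⁺) and u(s) = σ + u'(r⁺)(s−r) + o(s−r), then u'(r⁺) = 0. -/

import Mathlib

open Filter Topology MeasureTheory

theorem stmt19 (N : ℕ) (hN : 1 ≤ N) (r δ σ C γ d : ℝ)
    (hr : 0 < r) (hδ : 0 < δ) (hσ : 0 < σ) (hC : 0 < C) (hγ1 : 1 ≤ γ) (hγ2 : γ < 2)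
    (h : ℝ → ℝ) (hcont : ContinuousOn h (Set.Ico 0 σ))
    (hmono : MonotoneOn h (Set.Ico 0 σ)) (hnonneg : ∀ t ∈ Set.Ico 0 σ, 0 ≤ h t)
    (hlim : Tendsto (fun s => (σ - s) ^ γ * h s) (𝓝[<] σ) (𝓝 C))
    (u : ℝ → ℝ) (hu : ContDiffOn ℝ 1 u (Set.Icc r (r + δ)))
    (hur : u r = σ) (hrange : ∀ s ∈ Set.Icc r (r + δ), 0 ≤ u s ∧ u s ≤ σ)
    (hlt : ∀ s ∈ Set.Ioc r (r + δ), u s < σ)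
    (hexp : Tendsto (fun s => (u s - σ - d * (s - r)) / (s - r)) (𝓝[>] r) (𝓝 0))
    (hint : IntegrableOn (fun s => h (u s) * (deriv u s) ^ 2 * s ^ (N - 1))
      (Set.Ioo r (r + δ)) volume) :
    d = 0 := by
  have hrδ : r < r + δ := by linarith
  have hr_mem : r ∈ Set.Icc r (r + δ) := ⟨le_refl r, hrδ.le⟩
  -- the difference quotient tends to d
  have hq : Tendsto (fun s => (u s - σ) / (s - r)) (𝓝[>] r) (𝓝 d) := by
    have h1 : Tendsto (fun s => (u s - σ - d * (s - r)) / (s - r) + d) (𝓝[>] r)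
        (𝓝 (0 + d)) := hexp.add tendsto_const_nhds
    rw [zero_add] at h1
    refine h1.congr' ?_
    filter_upwards [self_mem_nhdsWithin] with s hs
    have hsr : s - r ≠ 0 := sub_ne_zero.2 (ne_of_gt hs)
    field_simp
    ring
  -- d ≤ 0
  have hd_le : d ≤ 0 := by
    refine le_of_tendsto hq ?_
    filter_upwards [Ioo_mem_nhdsGT_of_mem ⟨le_refl r, hrδ⟩] with s hs
    have hus : u s ≤ σ := (hrange s ⟨hs.1.le, hs.2.le⟩).2
    exact div_nonpos_of_nonpos_of_nonneg (by linarith) (by linarith [hs.1])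
  by_contra hd0
  have hd : d < 0 := lt_of_le_of_ne hd_le hd0
  set m : ℝ := -d with hm_def
  have hm : 0 < m := by simp only [hm_def]; linarith
  -- u has right derivative d at r
  have hd1 : HasDerivWithinAt u d (Set.Ioi r) r := by
    rw [hasDerivWithinAt_iff_tendsto_slope]
    have hset : Set.Ioi r \ {r} = Set.Ioi r := Set.diff_singleton_eq_self (by simp)
    rw [hset]
    refine hq.congr fun s => ?_
    rw [slope_def_field, hur, ← neg_div_neg_eq]
  -- the derivative within Icc at r equals d, and deriv u tends to d from the right
  have hUD : UniqueDiffOn ℝ (Set.Icc r (r + δ)) := uniqueDiffOn_Icc hrδ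
  have hdiff : DifferentiableOn ℝ u (Set.Icc r (r + δ)) := hu.differentiableOn one_ne_zero
  have hIoc_mem : Set.Ioc r (r + δ) ∈ 𝓝[>] r := Ioc_mem_nhdsGT_of_mem ⟨le_refl r, hrδ⟩
  have hIcc_mem : Set.Icc r (r + δ) ∈ 𝓝[>] r :=
    Filter.mem_of_superset hIoc_mem Set.Ioc_subset_Icc_self
  have hgr : derivWithin u (Set.Icc r (r + δ)) r = d := by
    have h1 : HasDerivWithinAt u (derivWithin u (Set.Icc r (r + δ)) r) (Set.Ioi r) r :=
      ((hdiff r hr_mem).hasDerivWithinAt).mono_of_mem_nhdsWithin hIcc_mem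
    exact (uniqueDiffWithinAt_Ioi r).eq_deriv _ h1 hd1
  have hderiv_tendsto : Tendsto (deriv u) (𝓝[>] r) (𝓝 d) := by
    have hgc : ContinuousOn (derivWithin u (Set.Icc r (r + δ))) (Set.Icc r (r + δ)) :=
      hu.continuousOn_derivWithin hUD le_rfl
    have h1 : Tendsto (derivWithin u (Set.Icc r (r + δ))) (𝓝[Set.Icc r (r + δ)] r) (𝓝 d) := by
      have := (hgc r hr_mem).tendsto
      rwa [hgr] at this
    have h2 : Tendsto (derivWithin u (Set.Icc r (r + δ))) (𝓝[>] r) (𝓝 d) := by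
      have := h1.mono_left (nhdsWithin_mono r Set.Ioo_subset_Icc_self)
      rwa [nhdsWithin_Ioo_eq_nhdsGT hrδ] at this
    refine h2.congr' ?_
    filter_upwards [Ioo_mem_nhdsGT_of_mem ⟨le_refl r, hrδ⟩] with s hs
    exact derivWithin_of_mem_nhds (Icc_mem_nhds hs.1 hs.2)
  -- u tends to σ from below
  have huc : Tendsto u (𝓝[>] r) (𝓝 σ) := by
    have h1 := ((hu.continuousOn) r hr_mem).tendsto
    rw [hur] at h1
    have h2 := h1.mono_left (nhdsWithin_mono r Set.Ioo_subset_Icc_self)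
    rwa [nhdsWithin_Ioo_eq_nhdsGT hrδ] at h2
  have hcomp : Tendsto u (𝓝[>] r) (𝓝[<] σ) := by
    refine tendsto_nhdsWithin_of_tendsto_nhds_of_eventually_within _ huc ?_
    filter_upwards [Ioo_mem_nhdsGT_of_mem ⟨le_refl r, hrδ⟩] with s hs
    exact hlt s ⟨hs.1, hs.2.le⟩
  -- lower bound for h near σ
  have hc' : ∀ᶠ t in 𝓝[<] σ, C / (2 * (σ - t)) ≤ h t := by
    have h1 : ∀ᶠ t in 𝓝[<] σ, C / 2 < (σ - t) ^ γ * h t :=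
      hlim.eventually (eventually_gt_nhds (by linarith))
    have h2 : ∀ᶠ t in 𝓝[<] σ, t ∈ Set.Ioo (max 0 (σ - 1)) σ :=
      Ioo_mem_nhdsLT (by
        rcases max_cases 0 (σ - 1) with ⟨h', _⟩ | ⟨h', _⟩ <;> rw [h'] <;> linarith)
    filter_upwards [h1, h2] with t h1t h2t
    have ht0 : 0 ≤ t := le_trans (le_max_left 0 (σ - 1)) h2t.1.le
    have hts : t < σ := h2t.2
    have hσt : 0 < σ - t := by linarith
    have hσt1 : σ - t ≤ 1 := by
      have := le_trans (le_max_right 0 (σ - 1)) h2t.1.le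
      linarith
    have hpow : (σ - t) ^ γ ≤ σ - t := by
      have := Real.rpow_le_rpow_of_exponent_ge hσt hσt1 hγ1
      rwa [Real.rpow_one] at this
    have hh : 0 ≤ h t := hnonneg t ⟨ht0, hts⟩
    have hmul : C / 2 ≤ (σ - t) * h t :=
      le_trans h1t.le (mul_le_mul_of_nonneg_right hpow hh)
    rw [div_le_iff₀ (by positivity)]
    nlinarith
  -- collect eventual estimates
  have he1 : ∀ᶠ s in 𝓝[>] r, σ - u s ≤ 2 * m * (s - r) := by
    have h1 : ∀ᶠ s in 𝓝[>] r, 2 * d < (u s - σ) / (s - r) :=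
      hq.eventually (eventually_gt_nhds (by linarith))
    filter_upwards [h1, self_mem_nhdsWithin] with s hs1 hs2
    have hsr : 0 < s - r := sub_pos.2 hs2
    have := (lt_div_iff₀ hsr).1 hs1
    simp only [hm_def]
    nlinarith
  have he2 : ∀ᶠ s in 𝓝[>] r, deriv u s < d / 2 :=
    hderiv_tendsto.eventually (eventually_lt_nhds (by linarith))
  have he3 : ∀ᶠ s in 𝓝[>] r, C / (2 * (σ - u s)) ≤ h (u s) := hcomp.eventually hc'
  have he4 : ∀ᶠ s in 𝓝[>] r, s ∈ Set.Ioo r (r + δ) :=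
    Ioo_mem_nhdsGT_of_mem ⟨le_refl r, hrδ⟩
  set K : ℝ := C / (4 * m) * (m ^ 2 / 4) * r ^ (N - 1) with hK_def
  have hK : 0 < K := by
    have : (0 : ℝ) < r ^ (N - 1) := pow_pos hr _
    positivity
  have hbig : ∀ᶠ s in 𝓝[>] r,
      K * (s - r)⁻¹ ≤ h (u s) * (deriv u s) ^ 2 * s ^ (N - 1) := by
    filter_upwards [he1, he2, he3, he4] with s hs1 hs2 hs3 hs4
    have hsr : 0 < s - r := sub_pos.2 hs4.1
    have husσ : u s < σ := hlt s ⟨hs4.1, hs4.2.le⟩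
    have hσu : 0 < σ - u s := by linarith
    have hA0 : 0 ≤ h (u s) := hnonneg _ ⟨(hrange s ⟨hs4.1.le, hs4.2.le⟩).1, husσ⟩
    -- bound on h (u s)
    have h1 : C / (4 * m) * (s - r)⁻¹ ≤ h (u s) := by
      refine le_trans ?_ hs3
      rw [← div_eq_mul_inv, div_div]
      exact div_le_div_of_nonneg_left hC.le (by positivity) (by nlinarith)
    -- bound on (deriv u s)^2
    have h2 : m ^ 2 / 4 ≤ (deriv u s) ^ 2 := by
      have : deriv u s < -(m / 2) := by simp only [hm_def] at *; linarith
      nlinarith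
    -- bound on s ^ (N-1)
    have h3 : r ^ (N - 1) ≤ s ^ (N - 1) := pow_le_pow_left₀ hr.le hs4.1.le _
    calc K * (s - r)⁻¹ = C / (4 * m) * (s - r)⁻¹ * (m ^ 2 / 4) * r ^ (N - 1) := by
          rw [hK_def]; ring
      _ ≤ h (u s) * (deriv u s) ^ 2 * s ^ (N - 1) := by
          refine mul_le_mul (mul_le_mul h1 h2 (by positivity) hA0) h3
            (by positivity) (mul_nonneg hA0 (sq_nonneg _))
  -- extract an interval
  obtain ⟨b, hb, hIb⟩ := mem_nhdsGT_iff_exists_Ioo_subset.1 hbig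
  set b' : ℝ := min b (r + δ) with hb'_def
  have hrb' : r < b' := lt_min hb hrδ
  have hsub1 : Set.Ioo r b' ⊆ Set.Ioo r (r + δ) :=
    Set.Ioo_subset_Ioo le_rfl (min_le_right _ _)
  have hsub2 : ∀ s ∈ Set.Ioo r b',
      K * (s - r)⁻¹ ≤ h (u s) * (deriv u s) ^ 2 * s ^ (N - 1) := fun s hs =>
    hIb (Set.Ioo_subset_Ioo le_rfl (min_le_left _ _) hs)
  -- integrability comparison
  have hint2 : IntegrableOn (fun s => h (u s) * (deriv u s) ^ 2 * s ^ (N - 1))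
      (Set.Ioo r b') volume := hint.mono_set hsub1
  have hint3 : IntegrableOn (fun s => K * (s - r)⁻¹) (Set.Ioo r b') volume := by
    refine hint2.mono'
      ((measurable_const.mul ((measurable_id.sub measurable_const).inv)).aestronglyMeasurable) ?_
    filter_upwards [ae_restrict_mem measurableSet_Ioo] with s hs
    have hsr : 0 < s - r := sub_pos.2 hs.1
    rw [Real.norm_eq_abs, abs_of_nonneg (mul_nonneg hK.le (inv_nonneg.2 hsr.le))]
    exact hsub2 s hs
  have hint4 : IntegrableOn (fun s => (s - r)⁻¹) (Set.Ioo r b') volume := by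
    have := hint3.const_mul K⁻¹
    simpa [IntegrableOn, ← mul_assoc, inv_mul_cancel₀ hK.ne'] using this
  have hII : IntervalIntegrable (fun x => (x - r)⁻¹) volume r b' := by
    rw [intervalIntegrable_iff_integrableOn_Ioo_of_le hrb'.le]
    exact hint4
  rw [intervalIntegrable_sub_inv_iff] at hII
  rcases hII with h' | h'
  · exact absurd h' hrb'.ne
  · exact h' Set.left_mem_uIcc
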